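/- Suppose a_j ≤ b/w^(1/p) for all j ∈ J (finite) and the set S = { x ∈ [0,1]^J : max_j φ(a_j,x_j) = b } is nonempty. Define X̄ ∈ [0,1]^J by X̄_j = ((b^p - w·a_j^p)/(1-w))^(1/p) if j ∈ J' (i.e., b^p < 1-w or a_j ≥ ((b^p+w-1)/w)^(1/p)) and X̄_j = 1 otherwise. Then X̄ ∈ S and x ≤ X̄ componentwise for every x ∈ S, i.e., X̄ is the maximum solution of S. -/

import Mathlib

open scoped Classical

noncomputable def phi (w p a x : ℝ) : ℝ := (w * a ^ p + (1 - w) * x ^ p) ^ (1 / p)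

theorem stmt7 {J : Type*} [Fintype J] [Nonempty J] (w p : ℝ)
    (hw : w ∈ Set.Ioo (0:ℝ) 1) (hp : 0 < p)
    (a : J → ℝ) (ha : ∀ j, a j ∈ Set.Icc (0:ℝ) 1) (b : ℝ) (hb : b ∈ Set.Icc (0:ℝ) 1)
    (hA : ∀ j, a j ≤ b / w ^ (1 / p))
    (S : Set (J → ℝ))
    (hS : S = {x : J → ℝ | (∀ j, x j ∈ Set.Icc (0:ℝ) 1) ∧
        Finset.univ.sup' Finset.univ_nonempty (fun j => phi w p (a j) (x j)) = b})
    (hne : S.Nonempty)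
    (Xbar : J → ℝ)
    (hXbar : ∀ j, Xbar j =
      if b ^ p < 1 - w ∨ ((b ^ p + w - 1) / w) ^ (1 / p) ≤ a j
      then ((b ^ p - w * (a j) ^ p) / (1 - w)) ^ (1 / p) else 1) :
    Xbar ∈ S ∧ ∀ x ∈ S, x ≤ Xbar := by
  obtain ⟨hw0, hw1⟩ := hw
  obtain ⟨hb0, hb1⟩ := hb
  have h1w : (0:ℝ) < 1 - w := by linarith
  have hp' : p ≠ 0 := ne_of_gt hp
  have hbp0 : (0:ℝ) ≤ b ^ p := Real.rpow_nonneg hb0 p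
  -- numerator nonneg
  have hN : ∀ j, 0 ≤ b ^ p - w * a j ^ p := by
    intro j
    have h1 : a j ^ p ≤ (b / w ^ (1/p)) ^ p := Real.rpow_le_rpow (ha j).1 (hA j) hp.le
    have h2 : (b / w ^ (1/p)) ^ p = b ^ p / w := by
      rw [Real.div_rpow hb0 (Real.rpow_nonneg hw0.le _), one_div,
        Real.rpow_inv_rpow hw0.le hp']
    rw [h2, le_div_iff₀ hw0] at h1
    nlinarith
  have hap : ∀ j, 0 ≤ a j ^ p := fun j => Real.rpow_nonneg (ha j).1 p
  -- when the condition holds, numerator ≤ 1 - w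
  have hNle : ∀ j, (b ^ p < 1 - w ∨ ((b ^ p + w - 1) / w) ^ (1 / p) ≤ a j) →
      b ^ p - w * a j ^ p ≤ 1 - w := by
    intro j hj
    by_cases hcase : b ^ p < 1 - w
    · nlinarith [hap j]
    · rcases hj with h | h
      · exact absurd h hcase
      · have hc0 : 0 ≤ (b ^ p + w - 1) / w := by
          apply div_nonneg _ hw0.le; linarith [not_lt.mp hcase]
        have h' := Real.rpow_le_rpow (Real.rpow_nonneg hc0 _) h hp.le
        rw [one_div, Real.rpow_inv_rpow hc0 hp'] at h'
        rw [div_le_iff₀ hw0] at h'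
        linarith
  -- value of Xbar on the condition set: phi equals b and Xbar j ∈ [0,1]
  have hXmem : ∀ j, Xbar j ∈ Set.Icc (0:ℝ) 1 := by
    intro j
    rw [hXbar j]
    split_ifs with hj
    · have ht0 : 0 ≤ (b ^ p - w * a j ^ p) / (1 - w) := div_nonneg (hN j) h1w.le
      have ht1 : (b ^ p - w * a j ^ p) / (1 - w) ≤ 1 := by
        rw [div_le_one h1w]; exact hNle j hj
      exact ⟨Real.rpow_nonneg ht0 _, Real.rpow_le_one ht0 ht1 (by positivity)⟩
    · exact ⟨zero_le_one, le_refl 1⟩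
  have hphiXbar : ∀ j, (b ^ p < 1 - w ∨ ((b ^ p + w - 1) / w) ^ (1 / p) ≤ a j) →
      phi w p (a j) (Xbar j) = b := by
    intro j hj
    have ht0 : 0 ≤ (b ^ p - w * a j ^ p) / (1 - w) := div_nonneg (hN j) h1w.le
    have hXp : Xbar j ^ p = (b ^ p - w * a j ^ p) / (1 - w) := by
      rw [hXbar j, if_pos hj, one_div, Real.rpow_inv_rpow ht0 hp']
    unfold phi
    rw [hXp]
    have : w * a j ^ p + (1 - w) * ((b ^ p - w * a j ^ p) / (1 - w)) = b ^ p := by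
      field_simp
      ring
    rw [this, one_div, Real.rpow_rpow_inv hb0 hp']
  -- phi at 1 is ≤ b off the condition set
  have hphi1 : ∀ j, ¬ (b ^ p < 1 - w ∨ ((b ^ p + w - 1) / w) ^ (1 / p) ≤ a j) →
      phi w p (a j) 1 ≤ b := by
    intro j hj
    push_neg at hj
    obtain ⟨h1, h2⟩ := hj
    have hc0 : 0 ≤ (b ^ p + w - 1) / w := by
      apply div_nonneg _ hw0.le; linarith [h1]
    have hale : a j ^ p ≤ (b ^ p + w - 1) / w := by
      have := Real.rpow_le_rpow (ha j).1 h2.le hp.le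
      rwa [one_div, Real.rpow_inv_rpow hc0 hp'] at this
    have hinner : w * a j ^ p + (1 - w) * (1:ℝ) ^ p ≤ b ^ p := by
      rw [Real.one_rpow]
      have : w * a j ^ p ≤ b ^ p + w - 1 := by
        rw [le_div_iff₀ hw0] at hale; linarith [hale]
      linarith
    unfold phi
    calc (w * a j ^ p + (1 - w) * (1:ℝ) ^ p) ^ (1/p)
        ≤ (b ^ p) ^ (1/p) := by
          apply Real.rpow_le_rpow _ hinner (by positivity)
          have := hap j; rw [Real.one_rpow]; nlinarith
      _ = b := by rw [one_div, Real.rpow_rpow_inv hb0 hp']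
  -- each phi(a j, Xbar j) ≤ b
  have hle : ∀ j, phi w p (a j) (Xbar j) ≤ b := by
    intro j
    by_cases hj : b ^ p < 1 - w ∨ ((b ^ p + w - 1) / w) ^ (1 / p) ≤ a j
    · exact le_of_eq (hphiXbar j hj)
    · rw [hXbar j, if_neg hj]; exact hphi1 j hj
  -- existence of an index in the condition set
  obtain ⟨x0, hx0⟩ := hne
  rw [hS] at hx0
  obtain ⟨hx0mem, hx0sup⟩ := hx0
  obtain ⟨j0, _, hj0⟩ := Finset.exists_mem_eq_sup' (Finset.univ_nonempty)
    (fun j => phi w p (a j) (x0 j))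
  have hphij0 : phi w p (a j0) (x0 j0) = b := by rw [← hx0sup, hj0]
  have hinner0 : 0 ≤ w * a j0 ^ p + (1 - w) * x0 j0 ^ p := by
    have := hap j0
    have := Real.rpow_nonneg (hx0mem j0).1 p
    nlinarith
  have hinnerj0 : w * a j0 ^ p + (1 - w) * x0 j0 ^ p = b ^ p := by
    have := congrArg (fun t => t ^ p) hphij0
    simpa [phi, one_div, Real.rpow_inv_rpow hinner0 hp'] using this
  have hj0cond : b ^ p < 1 - w ∨ ((b ^ p + w - 1) / w) ^ (1 / p) ≤ a j0 := by
    by_cases hcase : b ^ p < 1 - w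
    · exact Or.inl hcase
    · right
      have hx01 : x0 j0 ^ p ≤ 1 :=
        Real.rpow_le_one (hx0mem j0).1 (hx0mem j0).2 hp.le
      have hc : (b ^ p + w - 1) / w ≤ a j0 ^ p := by
        rw [div_le_iff₀ hw0]; nlinarith
      have hc0 : 0 ≤ (b ^ p + w - 1) / w := by
        apply div_nonneg _ hw0.le; linarith [not_lt.mp hcase]
      have := Real.rpow_le_rpow hc0 hc (by positivity : (0:ℝ) ≤ 1/p)
      rw [one_div] at this ⊢
      rwa [Real.rpow_rpow_inv (ha j0).1 hp'] at this
  constructor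
  · rw [hS]
    refine ⟨hXmem, le_antisymm (Finset.sup'_le _ _ fun j _ => hle j) ?_⟩
    rw [← hphiXbar j0 hj0cond]
    exact Finset.le_sup' (fun j => phi w p (a j) (Xbar j)) (Finset.mem_univ j0)
  · intro x hx
    rw [hS] at hx
    obtain ⟨hxmem, hxsup⟩ := hx
    intro j
    have hphix : phi w p (a j) (x j) ≤ b := by
      rw [← hxsup]
      exact Finset.le_sup' (fun j => phi w p (a j) (x j)) (Finset.mem_univ j)
    rw [hXbar j]
    split_ifs with hj
    · have hinnerx : 0 ≤ w * a j ^ p + (1 - w) * x j ^ p := by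
        have := hap j
        have := Real.rpow_nonneg (hxmem j).1 p
        nlinarith
      have hle' : w * a j ^ p + (1 - w) * x j ^ p ≤ b ^ p := by
        have := hphix
        unfold phi at this
        rw [one_div, Real.rpow_inv_le_iff_of_pos hinnerx hb0 hp] at this
        exact this
      have hxp : x j ^ p ≤ (b ^ p - w * a j ^ p) / (1 - w) := by
        rw [le_div_iff₀ h1w]; linarith
      have := Real.rpow_le_rpow (Real.rpow_nonneg (hxmem j).1 p) hxp
        (by positivity : (0:ℝ) ≤ 1/p)
      rw [one_div] at this ⊢
      rwa [Real.rpow_rpow_inv (hxmem j).1 hp'] at this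
    · exact (hxmem j).2
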